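/- Let S̃ be a finite ground set, g : 2^S̃ → ℝ a set function, D̂ : S̃ → ℝ strictly positive costs, α ∈ S̃, and θ ∈ ℝ with g(S̃ \ {α}) ≥ θ. Let (i_1, …, i_K) be the sequence of elements selected by the vanilla greedy incentive search (Algorithm 3) run on the candidate set S̃ \ {α}, and set S'_k = {i_1, …, i_k} with S'_0 = ∅. Suppose that for every k ∈ {1, …, K}, (g(S'_{k−1} ∪ {α}) − g(S'_{k−1}))/D̂(α) < (g(S'_{k−1} ∪ {i_k}) − g(S'_{k−1}))/D̂(i_k). Then Algorithm 3 run on the full candidate set S̃ selects exactly the same sequence (i_1, …, i_K); in particular, α is not selected. (Claim used to verify that the critical value formula for Algorithm 3 upper-bounds the reports under which α can be selected.) -/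

import Mathlib

open Finset

variable {ι : Type*}

/-- The marginal-gain-to-cost ratio `(g(S ∪ {u}) − g(S)) / D̂(u)`. -/
noncomputable def marginalRatio [LinearOrder ι] (g : Finset ι → ℝ) (D : ι → ℝ)
    (S : Finset ι) (u : ι) : ℝ :=
  (g (insert u S) - g S) / D u

/-- The while-loop of the vanilla greedy incentive search (Algorithm 3), with fuel:
while `g(S) < θ`, add to `S` the element of `C \ S` with the largest
marginal-gain-to-cost ratio (ties broken by the linear order on `ι`), recording the
selected elements in order. -/
noncomputable def vanillaAux [LinearOrder ι] (g : Finset ι → ℝ) (D : ι → ℝ)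
    (C : Finset ι) (θ : ℝ) : ℕ → Finset ι → List ι
  | 0, _ => []
  | n + 1, S =>
    if θ ≤ g S then []
    else
      let T := C \ S
      let T' := T.filter fun u => ∀ v ∈ T, marginalRatio g D S v ≤ marginalRatio g D S u
      if h : T'.Nonempty then T'.min' h :: vanillaAux g D C θ n (insert (T'.min' h) S)
      else []

/-- The sequence of elements selected by the vanilla greedy incentive search
(Algorithm 3) on the candidate set `C` with threshold `θ`, in selection order. -/
noncomputable def vanillaSeq [LinearOrder ι] (g : Finset ι → ℝ) (D : ι → ℝ)
    (C : Finset ι) (θ : ℝ) : List ι :=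
  vanillaAux g D C θ (C.card + 1) ∅

/-- The output set of the vanilla greedy incentive search (Algorithm 3). -/
noncomputable def vanillaSearch [LinearOrder ι] (g : Finset ι → ℝ) (D : ι → ℝ)
    (C : Finset ι) (θ : ℝ) : Finset ι :=
  (vanillaSeq g D C θ).toFinset

lemma vanillaAux_mem_subset [LinearOrder ι] (g : Finset ι → ℝ) (D : ι → ℝ)
    (C : Finset ι) (θ : ℝ) :
    ∀ (n : ℕ) (S : Finset ι) (x : ι), x ∈ vanillaAux g D C θ n S → x ∈ C := by
  intro n
  induction n with
  | zero => intro S x hx; simp [vanillaAux] at hx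
  | succ n ih =>
    intro S x hx
    rw [vanillaAux] at hx
    split at hx
    · simp at hx
    · dsimp only at hx
      split at hx
      · rename_i h
        rcases List.mem_cons.mp hx with rfl | hx
        · exact (Finset.mem_sdiff.mp (Finset.mem_filter.mp (Finset.min'_mem _ h)).1).1
        · exact ih _ _ hx
      · simp at hx

lemma vanillaAux_fuel [LinearOrder ι] (g : Finset ι → ℝ) (D : ι → ℝ)
    (C : Finset ι) (θ : ℝ) :
    ∀ (n m : ℕ) (S : Finset ι), (C \ S).card < n → (C \ S).card < m →
      vanillaAux g D C θ n S = vanillaAux g D C θ m S := by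
  intro n
  induction n with
  | zero => intro m S hn; omega
  | succ n ih =>
    intro m S hn hm
    obtain ⟨m, rfl⟩ : ∃ m', m = m' + 1 := ⟨m - 1, by omega⟩
    rw [vanillaAux, vanillaAux]
    split
    · rfl
    · dsimp only
      split
      · rename_i h
        set u := (((C \ S).filter fun u => ∀ v ∈ C \ S,
            marginalRatio g D S v ≤ marginalRatio g D S u)).min' h with hu
        have huT : u ∈ C \ S := (Finset.mem_filter.mp (Finset.min'_mem _ h)).1
        have hcard : (C \ insert u S).card = (C \ S).card - 1 := by
          rw [show C \ insert u S = (C \ S).erase u by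
            ext x; simp [Finset.mem_sdiff, Finset.mem_erase]; tauto]
          exact Finset.card_erase_of_mem huT
        have hpos : 0 < (C \ S).card := Finset.card_pos.mpr ⟨u, huT⟩
        rw [ih m (insert u S) (by omega) (by omega)]
      · rfl

lemma vanillaAux_erase_eq [LinearOrder ι] (g : Finset ι → ℝ) (D : ι → ℝ)
    (Stilde : Finset ι) (α : ι) (hα : α ∈ Stilde) (θ : ℝ)
    (hθ : θ ≤ g (Stilde.erase α)) :
    ∀ (n : ℕ) (S : Finset ι), S ⊆ Stilde.erase α →
      (∀ (k : ℕ) (hk : k < (vanillaAux g D (Stilde.erase α) θ n S).length),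
        marginalRatio g D
          (((vanillaAux g D (Stilde.erase α) θ n S).take k).toFinset ∪ S) α <
        marginalRatio g D
          (((vanillaAux g D (Stilde.erase α) θ n S).take k).toFinset ∪ S)
          ((vanillaAux g D (Stilde.erase α) θ n S).get ⟨k, hk⟩)) →
      vanillaAux g D Stilde θ n S = vanillaAux g D (Stilde.erase α) θ n S := by
  intro n
  induction n with
  | zero => intro S _ _; simp [vanillaAux]
  | succ n ih =>
    intro S hS hdom
    by_cases hgs : θ ≤ g S
    · rw [vanillaAux, vanillaAux, if_pos hgs, if_pos hgs]
    · have hαS : α ∉ S := fun hmem => (Finset.mem_erase.mp (hS hmem)).1 rfl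
      -- the erase-side candidate set is nonempty
      have hTe : (Stilde.erase α \ S).Nonempty := by
        rw [Finset.sdiff_nonempty]
        intro hsub
        exact hgs (le_of_le_of_eq hθ (congrArg g (Finset.Subset.antisymm hsub hS)))
      set Te := Stilde.erase α \ S with hTedef
      set Te' := Te.filter fun u => ∀ v ∈ Te,
        marginalRatio g D S v ≤ marginalRatio g D S u with hTe'def
      have hTe' : Te'.Nonempty := by
        obtain ⟨u, huT, humax⟩ := Te.exists_max_image (marginalRatio g D S) hTe
        exact ⟨u, Finset.mem_filter.mpr ⟨huT, humax⟩⟩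
      set u0 := Te'.min' hTe' with hu0
      have hu0mem : u0 ∈ Te' := Finset.min'_mem _ _
      have hu0T : u0 ∈ Te := (Finset.mem_filter.mp hu0mem).1
      have hu0max : ∀ v ∈ Te, marginalRatio g D S v ≤ marginalRatio g D S u0 :=
        (Finset.mem_filter.mp hu0mem).2
      have hstep : vanillaAux g D (Stilde.erase α) θ (n + 1) S =
          u0 :: vanillaAux g D (Stilde.erase α) θ n (insert u0 S) := by
        rw [vanillaAux, if_neg hgs]
        dsimp only
        rw [dif_pos hTe']
      -- dominance at the current step
      have hα0 : marginalRatio g D S α < marginalRatio g D S u0 := by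
        have h0 := hdom 0 (by rw [hstep]; simp)
        simpa [hstep] using h0
      -- full candidate set splits as `insert α Te`
      have hTf : Stilde \ S = insert α Te := by
        ext x
        simp only [hTedef, Finset.mem_sdiff, Finset.mem_insert, Finset.mem_erase]
        constructor
        · rintro ⟨hx, hxS⟩
          by_cases hxα : x = α
          · exact Or.inl hxα
          · exact Or.inr ⟨⟨hxα, hx⟩, hxS⟩
        · rintro (rfl | ⟨⟨_, hx⟩, hxS⟩)
          · exact ⟨hα, hαS⟩
          · exact ⟨hx, hxS⟩
      -- the argmax sets coincide
      have hfilter : ((Stilde \ S).filter fun u => ∀ v ∈ Stilde \ S,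
          marginalRatio g D S v ≤ marginalRatio g D S u) = Te' := by
        rw [hTf, hTe'def]
        ext v
        simp only [Finset.mem_filter, Finset.mem_insert]
        constructor
        · rintro ⟨hv | hv, hvmax⟩
          · exfalso
            have := hvmax u0 (Or.inr hu0T)
            rw [hv] at this
            exact absurd this (not_le.mpr hα0)
          · exact ⟨hv, fun w hw => hvmax w (Or.inr hw)⟩
        · rintro ⟨hv, hvmax⟩
          refine ⟨Or.inr hv, ?_⟩
          rintro w (rfl | hw)
          · exact le_of_lt (lt_of_lt_of_le hα0 (hvmax u0 hu0T))
          · exact hvmax w hw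
      have hTf' : ((Stilde \ S).filter fun u => ∀ v ∈ Stilde \ S,
          marginalRatio g D S v ≤ marginalRatio g D S u).Nonempty := by
        rw [hfilter]; exact hTe'
      have hstepf : vanillaAux g D Stilde θ (n + 1) S =
          u0 :: vanillaAux g D Stilde θ n (insert u0 S) := by
        rw [vanillaAux, if_neg hgs]
        dsimp only
        rw [dif_pos hTf']
        simp only [hfilter]
        rfl
      rw [hstep, hstepf]
      have hsub' : insert u0 S ⊆ Stilde.erase α :=
        Finset.insert_subset (Finset.mem_sdiff.mp hu0T).1 hS
      have hdom' : ∀ (k : ℕ)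
          (hk : k < (vanillaAux g D (Stilde.erase α) θ n (insert u0 S)).length),
          marginalRatio g D
            (((vanillaAux g D (Stilde.erase α) θ n (insert u0 S)).take k).toFinset
              ∪ insert u0 S) α <
          marginalRatio g D
            (((vanillaAux g D (Stilde.erase α) θ n (insert u0 S)).take k).toFinset
              ∪ insert u0 S)
            ((vanillaAux g D (Stilde.erase α) θ n (insert u0 S)).get ⟨k, hk⟩) := by
        intro k hk
        have hk' : k + 1 < (vanillaAux g D (Stilde.erase α) θ (n + 1) S).length := by
          rw [hstep]; simpa using Nat.succ_lt_succ hk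
        have h := hdom (k + 1) hk'
        have htake : ((vanillaAux g D (Stilde.erase α) θ (n + 1) S).take (k + 1)).toFinset
            ∪ S = ((vanillaAux g D (Stilde.erase α) θ n (insert u0 S)).take k).toFinset
            ∪ insert u0 S := by
          rw [hstep]
          simp [List.toFinset_cons, Finset.insert_union, Finset.union_insert]
        have hget : (vanillaAux g D (Stilde.erase α) θ (n + 1) S).get ⟨k + 1, hk'⟩ =
            (vanillaAux g D (Stilde.erase α) θ n (insert u0 S)).get ⟨k, hk⟩ := by
          exact List.get_of_eq hstep ⟨k + 1, hk'⟩
        rw [htake, hget] at h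
        exact h
      rw [ih (insert u0 S) hsub' hdom']

/-- Claim used to verify the critical value formula for Algorithm 3: let
`(i_1, …, i_K)` be the sequence selected by the vanilla greedy incentive search on the
candidate set `S̃ \ {α}`, with prefix sets `S'_k = {i_1, …, i_k}`.  If for every
`k ∈ {1, …, K}` the ratio of `α` at `S'_{k−1}` is strictly below that of `i_k`, then
Algorithm 3 run on the full candidate set `S̃` selects exactly the same sequence; in
particular, `α` is not selected. -/
theorem vanilla_not_selected_above_critical [LinearOrder ι]
    (Stilde : Finset ι) (g : Finset ι → ℝ) (D : ι → ℝ)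
    (hD : ∀ i ∈ Stilde, 0 < D i) (α : ι) (hα : α ∈ Stilde) (θ : ℝ)
    (hθ : θ ≤ g (Stilde.erase α))
    (hdominated : ∀ (k : ℕ) (hk : k < (vanillaSeq g D (Stilde.erase α) θ).length),
      marginalRatio g D ((vanillaSeq g D (Stilde.erase α) θ).take k).toFinset α <
        marginalRatio g D ((vanillaSeq g D (Stilde.erase α) θ).take k).toFinset
          ((vanillaSeq g D (Stilde.erase α) θ).get ⟨k, hk⟩)) :
    vanillaSeq g D Stilde θ = vanillaSeq g D (Stilde.erase α) θ ∧
      α ∉ vanillaSeq g D Stilde θ := by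
  have hcard : (Stilde.erase α).card = Stilde.card - 1 := Finset.card_erase_of_mem hα
  have hpos : 0 < Stilde.card := Finset.card_pos.mpr ⟨α, hα⟩
  have hfe : vanillaAux g D (Stilde.erase α) θ (Stilde.card + 1) ∅ =
      vanillaSeq g D (Stilde.erase α) θ := by
    rw [vanillaSeq]
    exact vanillaAux_fuel g D (Stilde.erase α) θ _ _ ∅
      (by simp [hcard]) (by simp)
  have key : vanillaAux g D Stilde θ (Stilde.card + 1) ∅ =
      vanillaAux g D (Stilde.erase α) θ (Stilde.card + 1) ∅ := by
    apply vanillaAux_erase_eq g D Stilde α hα θ hθ _ ∅ (Finset.empty_subset _)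
    intro k hk
    have hk2 : k < (vanillaSeq g D (Stilde.erase α) θ).length := by
      rw [← hfe]; exact hk
    have hget := List.get_of_eq hfe ⟨k, hk⟩
    rw [Finset.union_empty, hget]
    simp only [hfe]
    exact hdominated k hk2
  have hmain : vanillaSeq g D Stilde θ = vanillaSeq g D (Stilde.erase α) θ := by
    rw [vanillaSeq, key, hfe]
  refine ⟨hmain, ?_⟩
  rw [hmain]
  intro hmem
  have := vanillaAux_mem_subset g D (Stilde.erase α) θ _ _ _ hmem
  exact (Finset.mem_erase.mp this).1 rfl
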